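/- (Verification for the time-dependent strike, case m = 0.) Set γ = r − σ²/2, b(t) = K_T·e^{−γ(T−t)} and K(t) = 2·K_T·e^{−γ(T−t)}·N(σ√(T−t)) for t ∈ [0,T]. Then for every t ∈ [0,T): K(t) − b(t) = V^e(t, b(t)) + ∫_t^T e^{−r(u−t)}·(r·K(u) − K′(u))·N( (log(b(u)/b(t)) − (r − σ²/2)(u−t)) / (σ√(u−t)) ) du, where K′ denotes the derivative of K on [t,T) and V^e(t,x) = K_T·e^{−r(T−t)}·N( (log(K_T/x) − (r − σ²/2)(T−t)) / (σ√(T−t)) ) − x·N( (log(K_T/x) − (r + σ²/2)(T−t)) / (σ√(T−t)) ) for x > 0. -/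

import Mathlib

open MeasureTheory Real Set Filter

/-- Standard normal cdf `N(x)`. -/
noncomputable def stdCdf (x : ℝ) : ℝ := ∫ y in Set.Iic x, Real.exp (-y ^ 2 / 2) / Real.sqrt (2 * Real.pi)

/-- Exercise boundary `b(t) = K_T·e^{−γ(T−t)}` with `γ = r − σ²/2`. -/
noncomputable def bndStrike (r σ T KT t : ℝ) : ℝ :=
  KT * Real.exp (-(r - σ ^ 2 / 2) * (T - t))

/-- Time-dependent strike `K(t) = 2·K_T·e^{−γ(T−t)}·N(σ√(T−t))`. -/
noncomputable def strikeFun (r σ T KT t : ℝ) : ℝ :=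
  2 * KT * Real.exp (-(r - σ ^ 2 / 2) * (T - t)) * stdCdf (σ * Real.sqrt (T - t))

/-- European put value with strike `K_T` under Black–Scholes. -/
noncomputable def VeStrike (r σ T KT t x : ℝ) : ℝ :=
  KT * Real.exp (-r * (T - t)) *
    stdCdf ((Real.log (KT / x) - (r - σ ^ 2 / 2) * (T - t)) / (σ * Real.sqrt (T - t)))
  - x * stdCdf ((Real.log (KT / x) - (r + σ ^ 2 / 2) * (T - t)) / (σ * Real.sqrt (T - t)))

lemma gaussPdf_eq : (fun y : ℝ => Real.exp (-y ^ 2 / 2) / Real.sqrt (2 * Real.pi))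
    = fun y : ℝ => Real.exp (-(1/2 : ℝ) * y ^ 2) * (Real.sqrt (2 * Real.pi))⁻¹ := by
  funext y; rw [div_eq_mul_inv]; ring_nf

lemma gauss_integrable : Integrable (fun y : ℝ => Real.exp (-y ^ 2 / 2) / Real.sqrt (2 * Real.pi)) := by
  rw [gaussPdf_eq]
  exact (integrable_exp_neg_mul_sq (by norm_num : (0:ℝ) < 1/2)).mul_const _

lemma gauss_total : ∫ y : ℝ, Real.exp (-y ^ 2 / 2) / Real.sqrt (2 * Real.pi) = 1 := by
  rw [gaussPdf_eq, MeasureTheory.integral_mul_const, integral_gaussian,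
    show (π / (1/2)) = 2 * π by ring, mul_inv_cancel₀]
  positivity

lemma stdCdf_nonneg (x : ℝ) : 0 ≤ stdCdf x := by
  apply MeasureTheory.setIntegral_nonneg measurableSet_Iic
  intro y _; positivity

lemma stdCdf_add_Ioi (x : ℝ) :
    stdCdf x + ∫ y in Set.Ioi x, Real.exp (-y ^ 2 / 2) / Real.sqrt (2 * Real.pi) = 1 := by
  rw [stdCdf, intervalIntegral.integral_Iic_add_Ioi (gauss_integrable.integrableOn)
    (gauss_integrable.integrableOn)]
  exact gauss_total

lemma stdCdf_neg (x : ℝ) : stdCdf (-x) = 1 - stdCdf x := by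
  have h1 : stdCdf (-x) = ∫ y in Set.Ioi x, Real.exp (-y ^ 2 / 2) / Real.sqrt (2 * Real.pi) := by
    have h := integral_comp_neg_Iic (-x) (fun y : ℝ => Real.exp (-y ^ 2 / 2) / Real.sqrt (2 * Real.pi))
    simp only [neg_neg, neg_sq] at h
    rw [stdCdf, ← h]
  rw [h1, ← stdCdf_add_Ioi x]; ring

lemma stdCdf_zero : stdCdf 0 = 1/2 := by
  have := stdCdf_neg 0
  rw [neg_zero] at this; linarith

lemma gauss_continuous : Continuous (fun y : ℝ => Real.exp (-y ^ 2 / 2) / Real.sqrt (2 * Real.pi)) := by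
  fun_prop

lemma stdCdf_eq_primitive (x : ℝ) :
    stdCdf x = stdCdf 0 + ∫ y in (0:ℝ)..x, Real.exp (-y ^ 2 / 2) / Real.sqrt (2 * Real.pi) := by
  rw [← intervalIntegral.integral_Iic_sub_Iic gauss_integrable.integrableOn
    gauss_integrable.integrableOn]
  simp [stdCdf]

lemma hasDerivAt_stdCdf (x : ℝ) :
    HasDerivAt stdCdf (Real.exp (-x ^ 2 / 2) / Real.sqrt (2 * Real.pi)) x := by
  have h : HasDerivAt (fun u => ∫ y in (0:ℝ)..u, Real.exp (-y ^ 2 / 2) / Real.sqrt (2 * Real.pi))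
      (Real.exp (-x ^ 2 / 2) / Real.sqrt (2 * Real.pi)) x :=
    intervalIntegral.integral_hasDerivAt_right (gauss_integrable.intervalIntegrable)
      (gauss_continuous.aestronglyMeasurable.stronglyMeasurableAtFilter)
      gauss_continuous.continuousAt
  have : stdCdf = fun u => stdCdf 0 + ∫ y in (0:ℝ)..u, Real.exp (-y ^ 2 / 2) / Real.sqrt (2 * Real.pi) := by
    funext u; exact stdCdf_eq_primitive u
  rw [this]
  exact (h.const_add _)

lemma continuous_stdCdf : Continuous stdCdf := by
  have : Differentiable ℝ stdCdf := fun x => (hasDerivAt_stdCdf x).differentiableAt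
  exact this.continuous


noncomputable def sDer (r σ T KT u : ℝ) : ℝ :=
  2 * KT * ((r - σ ^ 2 / 2) * Real.exp (-(r - σ ^ 2 / 2) * (T - u)) * stdCdf (σ * Real.sqrt (T - u))
    + Real.exp (-(r - σ ^ 2 / 2) * (T - u)) *
      (Real.exp (-(σ * Real.sqrt (T - u)) ^ 2 / 2) / Real.sqrt (2 * Real.pi)) *
      (σ * (-(1 / (2 * Real.sqrt (T - u))))))

lemma hasDerivAt_strikeFun (r σ T KT : ℝ) {u : ℝ} (hu : u < T) :
    HasDerivAt (strikeFun r σ T KT) (sDer r σ T KT u) u := by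
  have h1 : HasDerivAt (fun u : ℝ => T - u) (-1) u := (hasDerivAt_id u).const_sub T
  have he : HasDerivAt (fun u : ℝ => Real.exp (-(r - σ ^ 2 / 2) * (T - u)))
      ((r - σ ^ 2 / 2) * Real.exp (-(r - σ ^ 2 / 2) * (T - u))) u := by
    have := (h1.const_mul (-(r - σ ^ 2 / 2))).exp
    convert this using 1; ring
  have hs : HasDerivAt (fun u : ℝ => Real.sqrt (T - u)) (-(1 / (2 * Real.sqrt (T - u)))) u := by
    have h0 : T - u ≠ 0 := by linarith
    have := (Real.hasDerivAt_sqrt h0).comp u h1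
    exact this.congr_deriv (by ring)
  have hN : HasDerivAt (fun u : ℝ => stdCdf (σ * Real.sqrt (T - u)))
      ((Real.exp (-(σ * Real.sqrt (T - u)) ^ 2 / 2) / Real.sqrt (2 * Real.pi)) *
        (σ * (-(1 / (2 * Real.sqrt (T - u)))))) u :=
    by have := (hasDerivAt_stdCdf (σ * Real.sqrt (T - u))).comp u (hs.const_mul σ); exact this
  have := ((he.const_mul (2 * KT)).mul hN)
  unfold strikeFun sDer
  exact this.congr_deriv (by ring)

lemma continuous_strikeFun (r σ T KT : ℝ) : Continuous (strikeFun r σ T KT) := by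
  unfold strikeFun
  exact (continuous_const.mul (Real.continuous_exp.comp (by fun_prop))).mul
    (continuous_stdCdf.comp (by fun_prop))

theorem strike_boundary_solves_integral_equation (r σ T KT : ℝ)
    (hr : 0 < r) (hσ : 0 < σ) (hT : 0 < T) (hKT : 0 < KT) :
    ∀ t, 0 ≤ t → t < T →
      strikeFun r σ T KT t - bndStrike r σ T KT t
        = VeStrike r σ T KT t (bndStrike r σ T KT t)
          + ∫ u in t..T, Real.exp (-r * (u - t)) *
              (r * strikeFun r σ T KT u - deriv (strikeFun r σ T KT) u) *
              stdCdf ((Real.log (bndStrike r σ T KT u / bndStrike r σ T KT t)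
                - (r - σ ^ 2 / 2) * (u - t)) / (σ * Real.sqrt (u - t))) := by
  
  intro t ht0 htT
  have hτ : 0 < T - t := by linarith
  have hsτ : 0 < Real.sqrt (T - t) := Real.sqrt_pos.mpr hτ
  -- the cdf factor in the integrand is identically 1/2
  have hbb : ∀ u : ℝ, ((Real.log (bndStrike r σ T KT u / bndStrike r σ T KT t)
      - (r - σ ^ 2 / 2) * (u - t)) / (σ * Real.sqrt (u - t))) = 0 := by
    intro u
    have h1 : bndStrike r σ T KT u / bndStrike r σ T KT t
        = Real.exp ((r - σ ^ 2 / 2) * (u - t)) := by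
      unfold bndStrike
      rw [mul_div_mul_left _ _ (ne_of_gt hKT), ← Real.exp_sub]
      congr 1; ring
    rw [h1, Real.log_exp, sub_self, zero_div]
  -- rewrite the integrand
  have hIcongr : (∫ u in t..T, Real.exp (-r * (u - t)) *
        (r * strikeFun r σ T KT u - deriv (strikeFun r σ T KT) u) *
        stdCdf ((Real.log (bndStrike r σ T KT u / bndStrike r σ T KT t)
          - (r - σ ^ 2 / 2) * (u - t)) / (σ * Real.sqrt (u - t))))
      = ∫ u in t..T, Real.exp (-r * (u - t)) *
          (r * strikeFun r σ T KT u - deriv (strikeFun r σ T KT) u) * (1/2) := by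
    apply intervalIntegral.integral_congr
    intro u _
    simp only [hbb u, stdCdf_zero]
  -- derivative of the antiderivative
  have hderiv : ∀ u ∈ Ioo t T, HasDerivAt
      (fun u => -(1/2 : ℝ) * (Real.exp (-r * (u - t)) * strikeFun r σ T KT u))
      (Real.exp (-r * (u - t)) *
        (r * strikeFun r σ T KT u - deriv (strikeFun r σ T KT) u) * (1/2)) u := by
    intro u hu
    have hK := hasDerivAt_strikeFun r σ T KT hu.2
    have hdK : deriv (strikeFun r σ T KT) u = sDer r σ T KT u := hK.deriv
    have hE : HasDerivAt (fun u : ℝ => Real.exp (-r * (u - t)))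
        (Real.exp (-r * (u - t)) * -r) u := by
      have h := (((hasDerivAt_id u).sub_const t).const_mul (-r)).exp
      simpa using h
    have := (hE.mul hK).const_mul (-(1/2) : ℝ)
    exact this.congr_deriv (by rw [hdK]; ring)
  -- nonnegativity of the integrand
  have hnn : ∀ u ∈ Ioo t T, (0:ℝ) ≤ Real.exp (-r * (u - t)) *
      (r * strikeFun r σ T KT u - deriv (strikeFun r σ T KT) u) * (1/2) := by
    intro u hu
    have hK := hasDerivAt_strikeFun r σ T KT hu.2
    rw [hK.deriv]
    have key : r * strikeFun r σ T KT u - sDer r σ T KT u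
        = 2 * KT * Real.exp (-(r - σ ^ 2 / 2) * (T - u)) *
            (σ ^ 2 / 2 * stdCdf (σ * Real.sqrt (T - u)))
          + 2 * KT * Real.exp (-(r - σ ^ 2 / 2) * (T - u)) *
            (Real.exp (-(σ * Real.sqrt (T - u)) ^ 2 / 2) / Real.sqrt (2 * Real.pi)) *
            (σ * (1 / (2 * Real.sqrt (T - u)))) := by
      unfold strikeFun sDer; ring
    have h2 : (0:ℝ) ≤ r * strikeFun r σ T KT u - sDer r σ T KT u := by
      rw [key]
      have := stdCdf_nonneg (σ * Real.sqrt (T - u))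
      positivity
    positivity
  -- continuity of the antiderivative
  have hcontf : Continuous
      (fun u => -(1/2 : ℝ) * (Real.exp (-r * (u - t)) * strikeFun r σ T KT u)) := by
    exact continuous_const.mul ((Real.continuous_exp.comp (by fun_prop)).mul
      (continuous_strikeFun r σ T KT))
  -- integrability via nonnegativity
  have hint : IntervalIntegrable (fun u => Real.exp (-r * (u - t)) *
      (r * strikeFun r σ T KT u - deriv (strikeFun r σ T KT) u) * (1/2)) volume t T := by
    apply intervalIntegral.intervalIntegrable_deriv_of_nonneg hcontf.continuousOn
    · rwa [min_eq_left htT.le, max_eq_right htT.le]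
    · rwa [min_eq_left htT.le, max_eq_right htT.le]
  -- FTC
  have hFTC : (∫ u in t..T, Real.exp (-r * (u - t)) *
        (r * strikeFun r σ T KT u - deriv (strikeFun r σ T KT) u) * (1/2))
      = -(1/2 : ℝ) * (Real.exp (-r * (T - t)) * strikeFun r σ T KT T)
        - (-(1/2 : ℝ) * (Real.exp (-r * (t - t)) * strikeFun r σ T KT t)) :=
    intervalIntegral.integral_eq_sub_of_hasDerivAt_of_le htT.le hcontf.continuousOn hderiv hint
  have hKT' : strikeFun r σ T KT T = KT := by
    unfold strikeFun
    norm_num [sub_self, stdCdf_zero]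
    ring
  -- Ve value
  have hlog : Real.log (KT / bndStrike r σ T KT t) = (r - σ ^ 2 / 2) * (T - t) := by
    unfold bndStrike
    rw [div_mul_eq_div_div, div_self (ne_of_gt hKT), one_div, ← Real.exp_neg, Real.log_exp]
    ring
  have hsq : Real.sqrt (T - t) * Real.sqrt (T - t) = T - t := Real.mul_self_sqrt hτ.le
  have harg2 : (Real.log (KT / bndStrike r σ T KT t) - (r + σ ^ 2 / 2) * (T - t))
      / (σ * Real.sqrt (T - t)) = -(σ * Real.sqrt (T - t)) := by
    have hsq2 : Real.sqrt (T - t) ^ 2 = T - t := Real.sq_sqrt hτ.le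
    rw [hlog, div_eq_iff (by positivity)]
    linear_combination (σ ^ 2 : ℝ) * hsq2
  have hVe : VeStrike r σ T KT t (bndStrike r σ T KT t)
      = KT * Real.exp (-r * (T - t)) * (1/2)
        - bndStrike r σ T KT t * (1 - stdCdf (σ * Real.sqrt (T - t))) := by
    unfold VeStrike
    rw [harg2, stdCdf_neg, hlog, sub_self, zero_div, stdCdf_zero]
  rw [hIcongr, hFTC, hKT', hVe, sub_self, mul_zero, Real.exp_zero]
  unfold strikeFun bndStrike
  ring
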